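/- Let p, q be coprime integers with q ≥ 2. Then the Vasyunin sum satisfies |V(p,q)| ≪ q log q, i.e., there is an absolute constant C such that |∑_{k=1}^{q−1} {kp/q} cot(kπ/q)| ≤ C·q·log q. -/

import Mathlib

open Real Finset

lemma my_cot_le_inv {x : ℝ} (h0 : 0 < x) (h2 : x ≤ π / 2) : |Real.cot x| ≤ x⁻¹ := by
  have hπ := Real.pi_pos
  have hs : 0 < Real.sin x := Real.sin_pos_of_pos_of_lt_pi h0 (by linarith)
  have hc : 0 ≤ Real.cos x := Real.cos_nonneg_of_mem_Icc ⟨by linarith, h2⟩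
  rw [Real.cot_eq_cos_div_sin, abs_of_nonneg (div_nonneg hc hs.le)]
  rcases eq_or_lt_of_le h2 with he | hlt
  · rw [he, Real.cos_pi_div_two, zero_div]
    positivity
  · have ht := Real.lt_tan h0 hlt
    rw [Real.tan_eq_sin_div_cos] at ht
    have hc' : 0 < Real.cos x := Real.cos_pos_of_mem_Ioo ⟨by linarith, hlt⟩
    rw [lt_div_iff₀ hc'] at ht
    rw [div_le_iff₀ hs, inv_mul_eq_div, le_div_iff₀ h0]
    nlinarith

lemma my_abs_cot_le {x : ℝ} (h0 : 0 < x) (h1 : x < π) :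
    |Real.cot x| ≤ x⁻¹ + (π - x)⁻¹ := by
  have hπ := Real.pi_pos
  rcases le_or_gt x (π / 2) with h | h
  · have h2 := my_cot_le_inv h0 h
    have h3 : (0 : ℝ) ≤ (π - x)⁻¹ := by
      have : 0 < π - x := by linarith
      positivity
    linarith
  · have hx0 : 0 < π - x := by linarith
    have hx2 : π - x ≤ π / 2 := by linarith
    have hcot : Real.cot x = -Real.cot (π - x) := by
      rw [Real.cot_eq_cos_div_sin, Real.cot_eq_cos_div_sin, Real.cos_pi_sub,
        Real.sin_pi_sub]
      ring
    have h2 := my_cot_le_inv hx0 hx2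
    have h3 : (0 : ℝ) ≤ x⁻¹ := by positivity
    rw [hcot, abs_neg]
    linarith

theorem vasyunin_bound :
    ∃ C : ℝ, ∀ (p : ℤ) (q : ℕ), 2 ≤ q → Int.gcd p q = 1 →
      |∑ k ∈ Finset.Icc 1 (q - 1), Int.fract ((k : ℝ) * p / q) * Real.cot (k * Real.pi / q)| ≤
        C * q * Real.log q := by
  use 6
  intro p q hq _
  have hπ := Real.pi_pos
  have hπ1 : (1 : ℝ) ≤ π := by linarith [Real.two_le_pi]
  have hq0 : (0 : ℝ) < q := by positivity
  -- pointwise bound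
  have key : ∀ k ∈ Finset.Icc 1 (q - 1),
      |Int.fract ((k : ℝ) * p / q) * Real.cot (k * Real.pi / q)| ≤
        (q : ℝ) / k + (q : ℝ) / ((q : ℝ) - k) := by
    intro k hk
    simp only [Finset.mem_Icc] at hk
    have hk1 : 1 ≤ k := hk.1
    have hkq : k < q := by omega
    have hkR : (1 : ℝ) ≤ (k : ℝ) := by exact_mod_cast hk1
    have hkqR : (k : ℝ) < q := by exact_mod_cast hkq
    have hx0 : 0 < (k : ℝ) * π / q := by positivity
    have hx1 : (k : ℝ) * π / q < π := by
      rw [div_lt_iff₀ hq0]; nlinarith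
    have hcot := my_abs_cot_le hx0 hx1
    have hb1 : ((k : ℝ) * π / q)⁻¹ ≤ (q : ℝ) / k := by
      have h1 : (k : ℝ) / q ≤ (k : ℝ) * π / q := by
        gcongr
        nlinarith
      have h2 : 0 < (k : ℝ) / q := by positivity
      calc ((k : ℝ) * π / q)⁻¹ ≤ ((k : ℝ) / q)⁻¹ := inv_anti₀ h2 h1
        _ = (q : ℝ) / k := by rw [inv_div]
    have hb2 : (π - (k : ℝ) * π / q)⁻¹ ≤ (q : ℝ) / ((q : ℝ) - k) := by
      have he : π - (k : ℝ) * π / q = ((q : ℝ) - k) * π / q := by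
        field_simp
      have h1 : ((q : ℝ) - k) / q ≤ ((q : ℝ) - k) * π / q := by
        gcongr
        nlinarith
      have h2 : 0 < ((q : ℝ) - k) / q := by
        apply div_pos (by linarith) hq0
      rw [he]
      calc (((q : ℝ) - k) * π / q)⁻¹ ≤ (((q : ℝ) - k) / q)⁻¹ := inv_anti₀ h2 h1
        _ = (q : ℝ) / ((q : ℝ) - k) := by rw [inv_div]
    have hf : |Int.fract ((k : ℝ) * p / q)| ≤ 1 := by
      rw [abs_of_nonneg (Int.fract_nonneg _)]
      exact (Int.fract_lt_one _).le
    calc |Int.fract ((k : ℝ) * p / q) * Real.cot ((k : ℝ) * π / q)|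
        = |Int.fract ((k : ℝ) * p / q)| * |Real.cot ((k : ℝ) * π / q)| := abs_mul _ _
      _ ≤ 1 * (((k : ℝ) * π / q)⁻¹ + (π - (k : ℝ) * π / q)⁻¹) := by
          apply mul_le_mul hf hcot (abs_nonneg _) zero_le_one
      _ = ((k : ℝ) * π / q)⁻¹ + (π - (k : ℝ) * π / q)⁻¹ := one_mul _
      _ ≤ (q : ℝ) / k + (q : ℝ) / ((q : ℝ) - k) := add_le_add hb1 hb2
  -- sum up
  have hsum1 : ∑ k ∈ Finset.Icc 1 (q - 1), (q : ℝ) / k ≤ (q : ℝ) * (1 + Real.log q) := by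
    have hh := harmonic_le_one_add_log (q - 1)
    have hhe : ((harmonic (q - 1) : ℚ) : ℝ) = ∑ k ∈ Finset.Icc 1 (q - 1), ((k : ℝ))⁻¹ := by
      rw [harmonic_eq_sum_Icc]
      push_cast
      rfl
    have hlog : Real.log (q - 1 : ℕ) ≤ Real.log q := by
      apply Real.log_le_log (by exact_mod_cast (by omega : 0 < q - 1))
      exact_mod_cast Nat.sub_le q 1
    have h1 : ∑ k ∈ Finset.Icc 1 (q - 1), (q : ℝ) / k
        = (q : ℝ) * ∑ k ∈ Finset.Icc 1 (q - 1), ((k : ℝ))⁻¹ := by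
      rw [Finset.mul_sum]
      exact Finset.sum_congr rfl fun k _ => (div_eq_mul_inv _ _)
    rw [h1, ← hhe]
    have : ((harmonic (q - 1) : ℚ) : ℝ) ≤ 1 + Real.log q := by
      calc ((harmonic (q - 1) : ℚ) : ℝ) ≤ 1 + Real.log (q - 1 : ℕ) := hh
        _ ≤ 1 + Real.log q := by linarith
    exact mul_le_mul_of_nonneg_left this hq0.le
  have hsum2 : ∑ k ∈ Finset.Icc 1 (q - 1), (q : ℝ) / ((q : ℝ) - k)
      = ∑ k ∈ Finset.Icc 1 (q - 1), (q : ℝ) / k := by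
    apply Finset.sum_nbij' (fun k => q - k) (fun k => q - k)
    · intro a ha; simp only [Finset.mem_Icc] at *; omega
    · intro a ha; simp only [Finset.mem_Icc] at *; omega
    · intro a ha; simp only [Finset.mem_Icc] at ha; omega
    · intro a ha; simp only [Finset.mem_Icc] at ha; omega
    · intro a ha
      simp only [Finset.mem_Icc] at ha
      have : ((q - a : ℕ) : ℝ) = (q : ℝ) - a := by
        push_cast [Nat.cast_sub (by omega : a ≤ q)]; ring
      rw [this]
  have htri : |∑ k ∈ Finset.Icc 1 (q - 1), Int.fract ((k : ℝ) * p / q) * Real.cot (k * π / q)|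
      ≤ ∑ k ∈ Finset.Icc 1 (q - 1), ((q : ℝ) / k + (q : ℝ) / ((q : ℝ) - k)) :=
    (Finset.abs_sum_le_sum_abs _ _).trans (Finset.sum_le_sum key)
  rw [Finset.sum_add_distrib, hsum2] at htri
  have hlog2 : (1 : ℝ) ≤ 2 * Real.log q := by
    have h2 : Real.log 2 ≤ Real.log q := by
      apply Real.log_le_log (by norm_num)
      exact_mod_cast hq
    have := Real.log_two_gt_d9
    linarith
  have hlogpos : 0 ≤ Real.log q := by
    have := Real.log_two_gt_d9
    have h2 : Real.log 2 ≤ Real.log q := by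
      apply Real.log_le_log (by norm_num)
      exact_mod_cast hq
    linarith
  calc |∑ k ∈ Finset.Icc 1 (q - 1), Int.fract ((k : ℝ) * p / q) * Real.cot (k * π / q)|
      ≤ 2 * ((q : ℝ) * (1 + Real.log q)) := by linarith
    _ ≤ 6 * q * Real.log q := by nlinarith
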